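/- arXiv:1706.08853 — 2 statements merged into one kernel-verified Lean document; each statement's English description precedes it below -/
import Mathlib

section
/- Let K ∈ L²(ℝ) be such that x ↦ x^j K(x) ∈ L²(ℝ) for some integer j ≥ 2. Then for any ζ ∈ L²(ℝ) with compact support and almost every x ∉ supp(ζ), one has |(K * ζ)(x)| ≤ C dist(x, supp ζ)^{-j} ‖ζ‖_{L²}, where C = (2π)^{-1/2} ‖x^j K(x)‖_{L²}. -/
open MeasureTheory

lemma l2_holder {f g : ℝ → ℝ} (hf : MemLp f 2 volume) (hg : MemLp g 2 volume) :
    ∫ y : ℝ, |f y| * |g y| ≤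
      (eLpNorm f 2 volume).toReal * (eLpNorm g 2 volume).toReal := by
  have hmul : MemLp (f • g) 1 volume := hg.smul hf (hpqr := ⟨by simp [ENNReal.inv_two_add_inv_two]⟩)
  have hb : eLpNorm (f • g) 1 volume ≤ eLpNorm f 2 volume * eLpNorm g 2 volume :=
    eLpNorm_smul_le_mul_eLpNorm hg.1 hf.1 (hpqr := ⟨by simp [ENNReal.inv_two_add_inv_two]⟩)
  have h1 : ∫ y : ℝ, |f y| * |g y| = (eLpNorm (f • g) 1 volume).toReal := by
    rw [eLpNorm_one_eq_lintegral_enorm,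
      ← integral_norm_eq_lintegral_enorm hmul.1]
    simp [Real.norm_eq_abs, abs_mul, Pi.smul_apply, smul_eq_mul]
  rw [h1]
  calc (eLpNorm (f • g) 1 volume).toReal
      ≤ (eLpNorm f 2 volume * eLpNorm g 2 volume).toReal :=
        ENNReal.toReal_mono (ENNReal.mul_ne_top hf.eLpNorm_ne_top hg.eLpNorm_ne_top) hb
    _ = _ := ENNReal.toReal_mul

/-- Kernel decay: if `K, x^j K ∈ L²(ℝ)` with `j ≥ 2`, and `ζ ∈ L²(ℝ)` is compactly
supported, then for a.e. `x ∉ supp ζ`,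
`|(K ⋆ ζ)(x)| ≤ (2π)^{-1/2} ‖x^j K‖_{L²} · dist(x, supp ζ)^{-j} · ‖ζ‖_{L²}`,
where the convolution carries the normalization `(2π)^{-1/2}` of the paper. -/
theorem stmt9 (j : ℕ) (hj : 2 ≤ j) (K : ℝ → ℝ) (hK : MemLp K 2 volume)
    (hKj : MemLp (fun x : ℝ => x ^ j * K x) 2 volume)
    (ζ : ℝ → ℝ) (hζ : MemLp ζ 2 volume) (hsupp : HasCompactSupport ζ) :
    ∀ᵐ x : ℝ, x ∉ tsupport ζ →
      |(2 * Real.pi) ^ (-(1 : ℝ) / 2) * ∫ y : ℝ, K (x - y) * ζ y| ≤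
        ((2 * Real.pi) ^ (-(1 : ℝ) / 2) *
            (eLpNorm (fun x : ℝ => x ^ j * K x) 2 volume).toReal) *
          Metric.infDist x (tsupport ζ) ^ (-(j : ℝ)) *
          (eLpNorm ζ 2 volume).toReal := by
  filter_upwards with x hx
  set C2 : ℝ := (2 * Real.pi) ^ (-(1 : ℝ) / 2) with hC2def
  have hC2 : 0 < C2 := Real.rpow_pos_of_pos (by positivity) _
  set d : ℝ := Metric.infDist x (tsupport ζ) with hd
  by_cases hne : (tsupport ζ).Nonempty
  swap
  · -- tsupport empty: ζ ≡ 0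
    have hz : ∀ y, ζ y = 0 := by
      intro y
      by_contra h
      exact hne ⟨y, subset_closure h⟩
    have h0 : eLpNorm ζ 2 volume = 0 := by
      rw [eLpNorm_eq_zero_iff hζ.1 (by norm_num)]
      exact Filter.Eventually.of_forall hz
    simp [hz, h0]
  · have hdpos : 0 < d := (isClosed_closure.notMem_iff_infDist_pos hne).1 hx
    have hmp : MeasurePreserving (fun y : ℝ => x - y) volume volume :=
      Measure.measurePreserving_sub_left volume x
    set F : ℝ → ℝ := fun y => (x - y) ^ j * K (x - y) with hF
    have hFmem : MemLp F 2 volume := by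
      have := hKj.comp_measurePreserving hmp
      simpa [Function.comp_def, hF] using this
    have hFnorm : eLpNorm F 2 volume = eLpNorm (fun x : ℝ => x ^ j * K x) 2 volume := by
      have := eLpNorm_comp_measurePreserving (p := 2) hKj.1 hmp
      simpa [Function.comp_def, hF] using this
    -- pointwise bound
    have hpt : ∀ y, |K (x - y) * ζ y| ≤ d ^ (-(j : ℝ)) * (|F y| * |ζ y|) := by
      intro y
      by_cases hy : ζ y = 0
      · simp [hy]
      · have hmem : y ∈ tsupport ζ := subset_closure hy
        have hdle : d ≤ |x - y| := by
          simpa [Real.dist_eq] using Metric.infDist_le_dist_of_mem hmem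
        have hKb : |K (x - y)| ≤ (d ^ j)⁻¹ * |F y| := by
          rw [le_inv_mul_iff₀ (by positivity)]
          have : d ^ j * |K (x - y)| ≤ |x - y| ^ j * |K (x - y)| := by
            gcongr
          calc d ^ j * |K (x - y)| ≤ |x - y| ^ j * |K (x - y)| := this
            _ = |F y| := by rw [hF, abs_mul, abs_pow]
        have hrw : d ^ (-(j : ℝ)) = (d ^ j)⁻¹ := by
          rw [Real.rpow_neg hdpos.le, Real.rpow_natCast]
        calc |K (x - y) * ζ y| = |K (x - y)| * |ζ y| := abs_mul _ _
          _ ≤ ((d ^ j)⁻¹ * |F y|) * |ζ y| := by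
              gcongr
          _ = d ^ (-(j : ℝ)) * (|F y| * |ζ y|) := by rw [hrw]; ring
    -- integrability of the dominating function
    have hint : Integrable (fun y => |F y| * |ζ y|) volume := by
      have : MemLp (F • ζ) 1 volume := hζ.smul hFmem (hpqr := ⟨by simp [ENNReal.inv_two_add_inv_two]⟩)
      have := (memLp_one_iff_integrable.1 this).abs
      simpa [abs_mul] using this
    have hmono : ∫ y : ℝ, |K (x - y) * ζ y| ≤
        ∫ y : ℝ, d ^ (-(j : ℝ)) * (|F y| * |ζ y|) := by
      refine integral_mono_of_nonneg (Filter.Eventually.of_forall fun y => abs_nonneg _)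
        (hint.const_mul _) (Filter.Eventually.of_forall hpt)
    have hhold : ∫ y : ℝ, |F y| * |ζ y| ≤
        (eLpNorm F 2 volume).toReal * (eLpNorm ζ 2 volume).toReal := l2_holder hFmem hζ
    have hnn : (0:ℝ) ≤ d ^ (-(j : ℝ)) := Real.rpow_nonneg hdpos.le _
    calc |C2 * ∫ y : ℝ, K (x - y) * ζ y| = C2 * |∫ y : ℝ, K (x - y) * ζ y| := by
          rw [abs_mul, abs_of_pos hC2]
      _ ≤ C2 * ∫ y : ℝ, |K (x - y) * ζ y| := by
          gcongr
          calc |∫ y : ℝ, K (x - y) * ζ y| = ‖∫ y : ℝ, K (x - y) * ζ y‖ := (Real.norm_eq_abs _).symm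
            _ ≤ ∫ y : ℝ, ‖K (x - y) * ζ y‖ := norm_integral_le_integral_norm _
            _ = ∫ y : ℝ, |K (x - y) * ζ y| := by simp [Real.norm_eq_abs, abs_mul]
      _ ≤ C2 * ∫ y : ℝ, d ^ (-(j : ℝ)) * (|F y| * |ζ y|) := by gcongr
      _ = C2 * (d ^ (-(j : ℝ)) * ∫ y : ℝ, |F y| * |ζ y|) := by rw [integral_const_mul]
      _ ≤ C2 * (d ^ (-(j : ℝ)) *
            ((eLpNorm F 2 volume).toReal * (eLpNorm ζ 2 volume).toReal)) := by
          gcongr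
      _ = (C2 * (eLpNorm (fun x : ℝ => x ^ j * K x) 2 volume).toReal) *
            d ^ (-(j : ℝ)) * (eLpNorm ζ 2 volume).toReal := by
          rw [hFnorm]; ring
end

section
/- Let θ ∈ [0,1). The function F(k) = √(3/(|k| tanh |k|) - 3/|k|²) (extended by F(0)=1) satisfies 0 < F(k) ≤ 1 for all k ∈ ℝ, F is even, and there exist constants C₋, C₊ > 0 such that C₋(1+|k|)^{-1/2} ≤ F(k) ≤ C₊(1+|k|)^{-1/2} for all k ∈ ℝ. -/
open Real Set

private lemma aux1 {x : ℝ} (hx : 0 < x) : Real.sinh x < x * Real.cosh x := by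
  have key : StrictMonoOn (fun y : ℝ => y * Real.cosh y - Real.sinh y) (Set.Ici 0) := by
    apply strictMonoOn_of_deriv_pos (convex_Ici 0)
    · fun_prop
    · intro y hy
      rw [interior_Ici, Set.mem_Ioi] at hy
      have h1 : HasDerivAt (fun y : ℝ => y * Real.cosh y - Real.sinh y)
          (1 * Real.cosh y + y * Real.sinh y - Real.cosh y) y :=
        ((hasDerivAt_id y).mul (Real.hasDerivAt_cosh y)).sub (Real.hasDerivAt_sinh y)
      rw [h1.deriv]
      have : 0 < Real.sinh y := Real.sinh_pos_iff.mpr hy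
      nlinarith
  have := key Set.self_mem_Ici (Set.mem_Ici.mpr hx.le) hx
  simpa using this

private lemma aux2 {x : ℝ} (hx : 0 ≤ x) : x ^ 3 / 3 ≤ x * Real.cosh x - Real.sinh x := by
  have key : MonotoneOn (fun y : ℝ => y * Real.cosh y - Real.sinh y - y ^ 3 / 3) (Set.Ici 0) := by
    apply monotoneOn_of_deriv_nonneg (convex_Ici 0)
    · fun_prop
    · intro y hy
      rw [interior_Ici] at hy
      exact (((differentiableAt_id.mul Real.differentiable_cosh.differentiableAt).sub
        Real.differentiable_sinh.differentiableAt).sub (by fun_prop)).differentiableWithinAt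
    · intro y hy
      rw [interior_Ici, Set.mem_Ioi] at hy
      have h1 : HasDerivAt (fun y : ℝ => y * Real.cosh y - Real.sinh y - y ^ 3 / 3)
          (1 * Real.cosh y + y * Real.sinh y - Real.cosh y - 3 * y ^ 2 / 3) y := by
        have h2 := (((hasDerivAt_id y).mul (Real.hasDerivAt_cosh y)).sub
          (Real.hasDerivAt_sinh y)).sub ((hasDerivAt_pow 3 y).div_const 3)
        exact h2.congr_deriv (by norm_num)
      rw [h1.deriv]
      have : y ≤ Real.sinh y := Real.self_le_sinh_iff.mpr hy.le
      nlinarith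
  have := key Set.self_mem_Ici (Set.mem_Ici.mpr hx) hx
  simp only [Real.cosh_zero, Real.sinh_zero] at this
  nlinarith [this]

private lemma aux3 {x : ℝ} (hx : 0 ≤ x) : 3 * x * Real.cosh x ≤ (3 + x ^ 2) * Real.sinh x := by
  have key : MonotoneOn (fun y : ℝ => (3 + y ^ 2) * Real.sinh y - 3 * y * Real.cosh y)
      (Set.Ici 0) := by
    apply monotoneOn_of_deriv_nonneg (convex_Ici 0)
    · fun_prop
    · intro y hy
      exact (((by fun_prop : DifferentiableAt ℝ (fun y : ℝ => (3 + y ^ 2)) y).mul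
        Real.differentiable_sinh.differentiableAt).sub
        ((by fun_prop : DifferentiableAt ℝ (fun y : ℝ => 3 * y) y).mul
        Real.differentiable_cosh.differentiableAt)).differentiableWithinAt
    · intro y hy
      rw [interior_Ici, Set.mem_Ioi] at hy
      have h1 : HasDerivAt (fun y : ℝ => (3 + y ^ 2) * Real.sinh y - 3 * y * Real.cosh y)
          ((0 + 2 * y ^ 1) * Real.sinh y + (3 + y ^ 2) * Real.cosh y -
            ((3 * 1) * Real.cosh y + 3 * y * Real.sinh y)) y := by
        exact (((hasDerivAt_const y (3:ℝ)).add (hasDerivAt_pow 2 y)).mul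
          (Real.hasDerivAt_sinh y)).sub
          (((hasDerivAt_id y).const_mul 3).mul (Real.hasDerivAt_cosh y))
      rw [h1.deriv]
      have h2 := aux1 hy
      nlinarith
  have := key Set.self_mem_Ici (Set.mem_Ici.mpr hx) hx
  simp only [Real.cosh_zero, Real.sinh_zero] at this
  nlinarith [this]

private lemma cosh_two_lt : Real.cosh 2 < 4 := by
  have h1 : Real.exp 2 = Real.exp 1 * Real.exp 1 := by
    rw [← Real.exp_add]; norm_num
  have h2 := Real.exp_one_lt_d9
  have h3 := Real.exp_one_gt_d9
  have h4 : Real.exp (-2) = 1 / Real.exp 2 := by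
    rw [Real.exp_neg]; ring
  have h5 : (0:ℝ) < Real.exp 2 := Real.exp_pos 2
  rw [Real.cosh_eq, h4]
  rw [h1] at *
  have h7 : 1 / (Real.exp 1 * Real.exp 1) < (0.15:ℝ) := by
    rw [div_lt_iff₀ h5]; nlinarith
  nlinarith

private lemma three_cosh_le {k : ℝ} (hk : 1 ≤ k) : 3 * Real.cosh k ≤ 4 * Real.sinh k := by
  have h1 : Real.exp 1 ≤ Real.exp k := Real.exp_le_exp.mpr hk
  have h3 := Real.exp_one_gt_d9
  have h4 : Real.exp (-k) = 1 / Real.exp k := by rw [Real.exp_neg]; ring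
  have h5 : (0:ℝ) < Real.exp k := Real.exp_pos k
  rw [Real.cosh_eq, Real.sinh_eq, h4]
  have h6 : (7:ℝ) ≤ Real.exp k * Real.exp k := by nlinarith
  have h8 : 1 / Real.exp k ≤ Real.exp k / 7 := by
    rw [div_le_div_iff₀ h5 (by norm_num)]; nlinarith
  linarith

private lemma gbounds {k : ℝ} (hk : 0 < k) :
    0 < 3 / (k * Real.tanh k) - 3 / k ^ 2 ∧
    3 / (k * Real.tanh k) - 3 / k ^ 2 ≤ 1 ∧
    1 / (4 * (1 + k)) ≤ 3 / (k * Real.tanh k) - 3 / k ^ 2 ∧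
    3 / (k * Real.tanh k) - 3 / k ^ 2 ≤ 8 / (1 + k) := by
  set s := Real.sinh k with hs
  set c := Real.cosh k with hc
  have hspos : 0 < s := Real.sinh_pos_iff.mpr hk
  have hcpos : 0 < c := Real.cosh_pos k
  have hone : 1 ≤ c := Real.one_le_cosh k
  have hcs : s < c := by
    have := Real.cosh_sub_sinh k
    have := Real.exp_pos (-k)
    rw [← hs, ← hc] at *
    linarith
  have h1 : s < k * c := aux1 hk
  have h2 : k ^ 3 / 3 ≤ k * c - s := aux2 hk.le
  have h3 : 3 * k * c ≤ (3 + k ^ 2) * s := aux3 hk.le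
  have hG : 3 / (k * Real.tanh k) - 3 / k ^ 2 = 3 * (k * c - s) / (k ^ 2 * s) := by
    rw [Real.tanh_eq_sinh_div_cosh, ← hs, ← hc]
    field_simp
  rw [hG]
  have hden : 0 < k ^ 2 * s := by positivity
  refine ⟨div_pos (by nlinarith) hden, ?_, ?_, ?_⟩
  · rw [div_le_one hden]; nlinarith
  · rw [div_le_div_iff₀ (by positivity) hden]
    rcases le_total k 2 with h | h
    · have hc4 : c < 4 := by
        calc c ≤ Real.cosh 2 := by
                rw [hc]
                exact Real.cosh_le_cosh.mpr (by rw [abs_of_pos hk]; simpa using h)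
          _ < 4 := cosh_two_lt
      nlinarith
    · -- k ≥ 2 : use k*c - s ≥ (k-1)*s
      nlinarith [mul_pos hspos (sub_pos.mpr hcs), mul_nonneg (mul_nonneg hspos.le (by linarith : (0:ℝ) ≤ k - 2)) (by linarith : (0:ℝ) ≤ k)]
  · rcases le_total k 1 with h | h
    · have hle1 : 3 * (k * c - s) / (k ^ 2 * s) ≤ 1 := by rw [div_le_one hden]; nlinarith
      have : (1:ℝ) ≤ 8 / (1 + k) := by rw [le_div_iff₀ (by linarith)]; linarith
      linarith
    · rw [div_le_div_iff₀ hden (by linarith)]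
      have h34 : 3 * c ≤ 4 * s := three_cosh_le h
      nlinarith [mul_pos hspos hk, mul_nonneg (mul_nonneg hspos.le hk.le) (by linarith : (0:ℝ) ≤ k - 1)]

/-- The improved-dispersion symbol `F(k) = √(3/(|k| tanh|k|) - 3/k²)` (with `F(0)=1`)
satisfies `0 < F ≤ 1`, is even, and is comparable to `(1+|k|)^{-1/2}`. -/
theorem stmt17 :
    let F : ℝ → ℝ := fun k =>
      if k = 0 then 1 else Real.sqrt (3 / (|k| * Real.tanh |k|) - 3 / k ^ 2)
    (∀ k : ℝ, 0 < F k ∧ F k ≤ 1) ∧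
    (∀ k : ℝ, F (-k) = F k) ∧
    ∃ Cm > (0 : ℝ), ∃ Cp > (0 : ℝ), ∀ k : ℝ,
      Cm * (1 + |k|) ^ (-(1 : ℝ) / 2) ≤ F k ∧
      F k ≤ Cp * (1 + |k|) ^ (-(1 : ℝ) / 2) := by
  intro F
  have hsqrt8 : (1:ℝ) ≤ Real.sqrt 8 := by
    rw [show (1:ℝ) = Real.sqrt 1 from Real.sqrt_one.symm]
    exact Real.sqrt_le_sqrt (by norm_num)
  have hsqrt8pos : (0:ℝ) < Real.sqrt 8 := by linarith
  have hFne : ∀ k : ℝ, k ≠ 0 →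
      F k = Real.sqrt (3 / (|k| * Real.tanh |k|) - 3 / |k| ^ 2) := by
    intro k hk
    simp only [F, if_neg hk, sq_abs]
  refine ⟨?_, ?_, 1/2, by norm_num, Real.sqrt 8, hsqrt8pos, ?_⟩
  · intro k
    by_cases hk : k = 0
    · simp [F, hk]
    · have ha : 0 < |k| := abs_pos.mpr hk
      obtain ⟨hg0, hg1, _, _⟩ := gbounds ha
      rw [hFne k hk]
      exact ⟨Real.sqrt_pos.mpr hg0, by
        calc Real.sqrt _ ≤ Real.sqrt 1 := Real.sqrt_le_sqrt hg1
          _ = 1 := Real.sqrt_one⟩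
  · intro k
    by_cases hk : k = 0
    · simp [F, hk]
    · have hk' : -k ≠ 0 := by simpa using hk
      simp only [F, if_neg hk, if_neg hk', abs_neg, neg_sq]
  · intro k
    by_cases hk : k = 0
    · simp only [hk, abs_zero, add_zero, Real.one_rpow]
      constructor
      · simp only [F, if_pos rfl]; norm_num
      · simp only [F, if_pos rfl]
        linarith
    · have ha : 0 < |k| := abs_pos.mpr hk
      set a := |k| with hadef
      have h1a : (0:ℝ) < 1 + a := by linarith
      obtain ⟨hg0, hg1, hg2, hg3⟩ := gbounds ha
      have hrw : (1 + a) ^ (-(1:ℝ)/2) = (Real.sqrt (1 + a))⁻¹ := by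
        rw [show (-(1:ℝ)/2) = -(1/2) by norm_num, Real.rpow_neg h1a.le,
          ← Real.sqrt_eq_rpow]
      have hsq14 : Real.sqrt (1/4) = 1/2 := by
        rw [show (1/4:ℝ) = (1/2)^2 by norm_num, Real.sqrt_sq (by norm_num)]
      rw [hFne k hk, ← hadef, hrw]
      constructor
      · have hlhs : (1/2:ℝ) * (Real.sqrt (1 + a))⁻¹ = Real.sqrt (1 / (4 * (1 + a))) := by
          rw [show (1/(4*(1+a)):ℝ) = (1/4) * (1+a)⁻¹ by field_simp,
            Real.sqrt_mul (by norm_num), Real.sqrt_inv, hsq14]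
        rw [hlhs]
        exact Real.sqrt_le_sqrt hg2
      · have hrhs : Real.sqrt 8 * (Real.sqrt (1 + a))⁻¹ = Real.sqrt (8 / (1 + a)) := by
          rw [show (8/(1+a):ℝ) = 8 * (1+a)⁻¹ by ring,
            Real.sqrt_mul (by norm_num), Real.sqrt_inv]
        rw [hrhs]
        exact Real.sqrt_le_sqrt hg3
end
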